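/- For all integers m and k with 1 ≤ k < m/2, there exists an injective map φ from the family of all k-element subsets of {1,…,m} to the family of all (k+1)-element subsets of {1,…,m} such that a ⊆ φ(a) for every k-element subset a. -/

import Mathlib

theorem exists_injective_superset_map (m k : ℕ) (hk : 1 ≤ k) (hkm : 2 * k < m) :
    ∃ φ : {a : Finset (Fin m) // a.card = k} → {b : Finset (Fin m) // b.card = k + 1},
      Function.Injective φ ∧ ∀ a, a.1 ⊆ (φ a).1 := by
  classical
  set ι := {a : Finset (Fin m) // a.card = k}
  set β := {b : Finset (Fin m) // b.card = k + 1}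
  set t : ι → Finset β := fun a => Finset.univ.filter (fun b => a.1 ⊆ b.1) with ht
  have hall : ∀ s : Finset ι, s.card ≤ (s.biUnion t).card := by
    intro s
    set T := s.biUnion t
    set r : ι → β → Prop := fun a b => a.1 ⊆ b.1 with hr
    have hm : ∀ a ∈ s, m - k ≤ (T.bipartiteAbove r a).card := by
      intro a ha
      have hcompl : (a.1ᶜ).card = m - k := by
        rw [Finset.card_compl, a.2]; simp
      rw [← hcompl, ← Finset.card_attach (s := a.1ᶜ)]
      apply Finset.card_le_card_of_injOn
        (fun x => (⟨insert x.1 a.1, by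
          rw [Finset.card_insert_of_notMem (Finset.mem_compl.mp x.2), a.2]⟩ : β))
      · intro x _
        simp only [Finset.mem_coe, Finset.mem_bipartiteAbove]
        constructor
        · refine Finset.mem_biUnion.mpr ⟨a, ha, ?_⟩
          simp [ht, Finset.subset_insert]
        · exact Finset.subset_insert _ _
      · intro x _ y _ hxy
        have h1 : insert x.1 a.1 = insert y.1 a.1 := congrArg Subtype.val hxy
        have hx : x.1 ∉ a.1 := Finset.mem_compl.mp x.2
        have hy : y.1 ∉ a.1 := Finset.mem_compl.mp y.2
        have : x.1 ∈ insert y.1 a.1 := h1 ▸ Finset.mem_insert_self _ _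
        rcases Finset.mem_insert.mp this with h | h
        · exact Subtype.ext h
        · exact absurd h hx
    have hn : ∀ b ∈ T, (s.bipartiteBelow r b).card ≤ k + 1 := by
      intro b _
      have : (b.1.powersetCard k).card = k + 1 := by
        rw [Finset.card_powersetCard, b.2, Nat.choose_succ_self_right]
      refine le_trans (Finset.card_le_card_of_injOn (fun a => a.1) ?_ ?_) this.le
      · intro a ha
        simp only [Finset.mem_coe, Finset.mem_bipartiteBelow] at ha
        exact Finset.mem_powersetCard.mpr ⟨ha.2, a.2⟩
      · exact fun a _ a' _ h => Subtype.ext h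
    have key := Finset.card_mul_le_card_mul r hm hn
    have hmk : k + 1 ≤ m - k := by omega
    have : s.card * (k + 1) ≤ T.card * (k + 1) :=
      le_trans (Nat.mul_le_mul_left _ hmk) key
    exact Nat.le_of_mul_le_mul_right this (by omega)
  obtain ⟨f, hf, hft⟩ := (Finset.all_card_le_biUnion_card_iff_exists_injective t).mp hall
  refine ⟨f, hf, fun a => ?_⟩
  have := hft a
  simp only [ht, Finset.mem_filter] at this
  exact this.2
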